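/- The function g(a) = log(Γ(2a-1)/Γ(a)²) is strictly increasing on [1, ∞), with g(1) = 0 and g(2) = log 2. -/
import Mathlib


open Set Real

private lemma strictConvexOn_log_Gamma' : StrictConvexOn ℝ (Ioi 0) (log ∘ Gamma) := by
  have h1 : ConvexOn ℝ (Ioi (0:ℝ)) (fun x : ℝ => log (Gamma (x + 1))) := by
    refine ⟨convex_Ioi _, fun x hx y hy a b ha hb hab => ?_⟩
    have hx1 : x + 1 ∈ Ioi (0:ℝ) := by simp at hx ⊢; linarith
    have hy1 : y + 1 ∈ Ioi (0:ℝ) := by simp at hy ⊢; linarith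
    have := Real.convexOn_log_Gamma.2 hx1 hy1 ha hb hab
    simp only [Function.comp_apply, smul_eq_mul] at this ⊢
    have heq : a * (x + 1) + b * (y + 1) = a * x + b * y + 1 := by
      rw [mul_add, mul_add]; linarith
    rw [heq] at this
    exact this
  have h2 : StrictConvexOn ℝ (Ioi (0:ℝ)) (fun x : ℝ => -log x) :=
    strictConcaveOn_log_Ioi.neg
  refine (h1.add_strictConvexOn h2).congr fun x hx => ?_
  have hx0 : (0:ℝ) < x := hx
  simp only [Function.comp_apply, Pi.add_apply]
  rw [Real.Gamma_add_one hx0.ne', Real.log_mul hx0.ne' (Real.Gamma_pos_of_pos hx0).ne']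
  ring

/-- The function `g(a) = log(Γ(2a-1)/Γ(a)²)` is strictly increasing on `[1,∞)`,
with `g(1) = 0` and `g(2) = log 2`. -/
theorem log_gamma_ratio_strictMono :
    StrictMonoOn (fun a : ℝ => Real.log (Real.Gamma (2 * a - 1) / Real.Gamma a ^ 2)) (Ici 1)
    ∧ Real.log (Real.Gamma (2 * (1 : ℝ) - 1) / Real.Gamma (1 : ℝ) ^ 2) = 0
    ∧ Real.log (Real.Gamma (2 * (2 : ℝ) - 1) / Real.Gamma (2 : ℝ) ^ 2) = Real.log 2 := by
  have hG3 : Real.Gamma (3:ℝ) = 2 := by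
    rw [show (3:ℝ) = ((2:ℕ) : ℝ) + 1 by norm_num, Real.Gamma_nat_eq_factorial]
    norm_num
  refine ⟨?_, by norm_num [Real.Gamma_one], ?_⟩
  swap
  · norm_num [hG3, Real.Gamma_two]
  intro x hx y hy hxy
  simp only [mem_Ici] at hx hy
  set L : ℝ → ℝ := log ∘ Gamma with hL
  have key : ∀ a : ℝ, 1 ≤ a →
      Real.log (Real.Gamma (2 * a - 1) / Real.Gamma a ^ 2) = L (2*a-1) - 2 * L a := by
    intro a ha
    have h1 : (0:ℝ) < 2*a - 1 := by linarith
    have h2 : (0:ℝ) < a := by linarith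
    rw [Real.log_div (Real.Gamma_pos_of_pos h1).ne' (by positivity), Real.log_pow]
    simp only [hL, Function.comp_apply, Nat.cast_ofNat]
  simp only [key x hx, key y hy]
  have hx0 : x ∈ Ioi (0:ℝ) := by simp; linarith
  have hy0 : y ∈ Ioi (0:ℝ) := by simp; linarith
  have h2x : (2*x-1) ∈ Ioi (0:ℝ) := by simp; linarith
  have h2y : (2*y-1) ∈ Ioi (0:ℝ) := by simp; linarith
  have hy1 : 1 < y := lt_of_le_of_lt hx hxy
  have hyy : y < 2*y - 1 := by linarith
  have s1 : (L y - L x) / (y - x) < (L (2*y-1) - L x) / ((2*y-1) - x) :=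
    strictConvexOn_log_Gamma'.secant_strict_mono hx0 hy0 h2y
      (by intro h; linarith) (by intro h; linarith) hyy
  have s2 : (L (2*y-1) - L x) / ((2*y-1) - x)
      ≤ (L (2*y-1) - L (2*x-1)) / ((2*y-1) - (2*x-1)) := by
    have := Real.convexOn_log_Gamma.secant_mono h2y hx0 h2x
      (by intro h; linarith) (by intro h; linarith) (by linarith : x ≤ 2*x-1)
    have e1 : (L x - L (2*y-1)) / (x - (2*y-1))
        = (L (2*y-1) - L x) / ((2*y-1) - x) := by rw [← neg_div_neg_eq]; ring_nf
    have e2 : (L (2*x-1) - L (2*y-1)) / ((2*x-1) - (2*y-1))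
        = (L (2*y-1) - L (2*x-1)) / ((2*y-1) - (2*x-1)) := by
      rw [← neg_div_neg_eq]; ring_nf
    rw [e1, e2] at this
    exact this
  have h := s1.trans_le s2
  rw [div_lt_div_iff₀ (by linarith) (by linarith)] at h
  nlinarith [h, sub_pos.mpr hxy]
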